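/- Fix k ∈ ℕ and let y_k, x_k ∈ ℝⁿ. Suppose x'_{k+1} = y_k − η∇f(y_k) − η·g' where g' is a subgradient of h at x'_{k+1}, and x''_{k+1} = x_k − η∇f(x_k) − η·g'' where g'' is a subgradient of h at x''_{k+1}, with η = 1/L. Then: (i) F(x''_{k+1}) ≤ F(x_k), and (ii) F(x'_{k+1}) ≤ f(y_k) − η·⟨∇f(y_k), ∇f(y_k) + g'⟩ + (η/2)·‖∇f(y_k) + g'‖² + h(x'_{k+1}). -/

import Mathlib

set_option maxHeartbeats 1000000

open scoped RealInnerProductSpace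

lemma descent_lemma {n : ℕ} (f : EuclideanSpace ℝ (Fin n) → ℝ)
    (hdiff : Differentiable ℝ f) (L : ℝ) (hL : 0 < L)
    (hlip : ∀ x x' : EuclideanSpace ℝ (Fin n),
      ‖gradient f x - gradient f x'‖ ≤ L * ‖x - x'‖)
    (x y : EuclideanSpace ℝ (Fin n)) :
    f y ≤ f x + ⟪gradient f x, y - x⟫ + L / 2 * ‖y - x‖ ^ 2 := by
  set v := y - x with hv
  have hinner : ∀ z : EuclideanSpace ℝ (Fin n), ⟪gradient f z, v⟫ = fderiv ℝ f z v := by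
    intro z
    rw [gradient, InnerProductSpace.toDual_symm_apply]
  have hg : ∀ t : ℝ, HasDerivAt (fun t : ℝ => f (x + t • v))
      (⟪gradient f (x + t • v), v⟫) t := by
    intro t
    have h1 : HasDerivAt (fun t : ℝ => x + t • v) v t := by
      simpa using ((hasDerivAt_id t).smul_const v).const_add x
    have h2 := ((hdiff (x + t • v)).hasFDerivAt).comp_hasDerivAt t h1
    rw [hinner]
    exact h2
  set c : ℝ := ⟪gradient f x, v⟫ with hc
  have hB : ∀ t : ℝ, HasDerivAt (fun t : ℝ => f x + c * t + L * ‖v‖ ^ 2 / 2 * t ^ 2)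
      (c + L * ‖v‖ ^ 2 * t) t := by
    intro t
    have h1 : HasDerivAt (fun t : ℝ => f x + c * t) c t := by
      simpa using ((hasDerivAt_id t).const_mul c).const_add (f x)
    have h2 : HasDerivAt (fun t : ℝ => L * ‖v‖ ^ 2 / 2 * t ^ 2)
        (L * ‖v‖ ^ 2 * t) t := by
      have := (hasDerivAt_pow 2 t).const_mul (L * ‖v‖ ^ 2 / 2)
      refine this.congr_deriv ?_
      ring
    exact h1.add h2
  have key : ∀ ⦃t : ℝ⦄, t ∈ Set.Icc (0:ℝ) 1 →
      f (x + t • v) ≤ f x + c * t + L * ‖v‖ ^ 2 / 2 * t ^ 2 := by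
    apply image_le_of_deriv_right_le_deriv_boundary
    · exact Continuous.continuousOn
        ((hdiff.continuous).comp (continuous_const.add (continuous_id.smul continuous_const)))
    · intro t _
      exact (hg t).hasDerivWithinAt
    · simp
    · exact Continuous.continuousOn
        ((continuous_const.add (continuous_const.mul continuous_id)).add
          (continuous_const.mul (continuous_pow 2)))
    · intro t _
      exact (hB t).hasDerivWithinAt
    · intro t ht
      have hsplit : ⟪gradient f (x + t • v), v⟫
          = c + ⟪gradient f (x + t • v) - gradient f x, v⟫ := by
        rw [inner_sub_left]; ring
      rw [hsplit]
      have h1 : ⟪gradient f (x + t • v) - gradient f x, v⟫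
          ≤ ‖gradient f (x + t • v) - gradient f x‖ * ‖v‖ :=
        real_inner_le_norm _ _
      have h2 : ‖gradient f (x + t • v) - gradient f x‖ ≤ L * (t * ‖v‖) := by
        have h4 := hlip (x + t • v) x
        have h5 : x + t • v - x = t • v := by module
        rw [h5, norm_smul, Real.norm_eq_abs, abs_of_nonneg ht.1] at h4
        exact h4
      have h3 : ‖gradient f (x + t • v) - gradient f x‖ * ‖v‖ ≤ L * (t * ‖v‖) * ‖v‖ :=
        mul_le_mul_of_nonneg_right h2 (norm_nonneg _)
      nlinarith [norm_nonneg v]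
  have hk := key (Set.mem_Icc.mpr ⟨zero_le_one, le_refl 1⟩)
  have h6 : x + (1:ℝ) • v = y := by rw [hv]; module
  rw [h6] at hk
  calc f y ≤ f x + c * 1 + L * ‖v‖ ^ 2 / 2 * 1 ^ 2 := hk
    _ = f x + ⟪gradient f x, y - x⟫ + L / 2 * ‖y - x‖ ^ 2 := by rw [hc, hv]; ring

/-- One-step descent properties of composite NSA with `η = 1/L`:
(i) the prox-gradient step from `x_k` does not increase `F = f + h`, and
(ii) the quadratic upper bound at the prox-gradient step from `y_k`. -/
theorem nsa_stmt_16 (n : ℕ) (hn : 1 ≤ n)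
    (f : EuclideanSpace ℝ (Fin n) → ℝ)
    (hconvf : ConvexOn ℝ Set.univ f)
    (hdiff : Differentiable ℝ f)
    (L : ℝ) (hL : 0 < L)
    (hlip : ∀ x x' : EuclideanSpace ℝ (Fin n),
      ‖gradient f x - gradient f x'‖ ≤ L * ‖x - x'‖)
    (h : EuclideanSpace ℝ (Fin n) → ℝ)
    (hconvh : ConvexOn ℝ Set.univ h)
    (η : ℝ) (hη : η = 1 / L)
    (yk xk xp xpp gp gpp : EuclideanSpace ℝ (Fin n))
    (hxp : xp = yk - η • gradient f yk - η • gp)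
    (hgp : ∀ u, h xp + ⟪gp, u - xp⟫ ≤ h u)
    (hxpp : xpp = xk - η • gradient f xk - η • gpp)
    (hgpp : ∀ u, h xpp + ⟪gpp, u - xpp⟫ ≤ h u) :
    f xpp + h xpp ≤ f xk + h xk ∧
    f xp + h xp ≤
      f yk - η * ⟪gradient f yk, gradient f yk + gp⟫
        + η / 2 * ‖gradient f yk + gp‖ ^ 2 + h xp := by
  have hηpos : 0 < η := by rw [hη]; positivity
  have hLη : L * η = 1 := by rw [hη]; field_simp
  -- Generic one-step bound:
  have step : ∀ (z zp g : EuclideanSpace ℝ (Fin n)),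
      zp = z - η • gradient f z - η • g →
      f zp ≤ f z - η * ⟪gradient f z, gradient f z + g⟫
        + η / 2 * ‖gradient f z + g‖ ^ 2 := by
    intro z zp g hz
    have hd : zp - z = (-η) • (gradient f z + g) := by
      rw [hz]; module
    have := descent_lemma f hdiff L hL hlip z zp
    rw [hd] at this
    rw [real_inner_smul_right, norm_smul] at this
    have hLeq : L / 2 * (‖(-η : ℝ)‖ * ‖gradient f z + g‖) ^ 2
        = η / 2 * ‖gradient f z + g‖ ^ 2 := by
      have hLη2 : L * η ^ 2 = η := by
        have : L * η ^ 2 = L * η * η := by ring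
        rw [this, hLη, one_mul]
      rw [Real.norm_eq_abs, abs_neg, abs_of_pos hηpos, mul_pow,
        show L / 2 * (η ^ 2 * ‖gradient f z + g‖ ^ 2)
          = L * η ^ 2 * ‖gradient f z + g‖ ^ 2 / 2 by ring, hLη2]
      ring
    nlinarith [this]
  constructor
  · have h1 := step xk xpp gpp hxpp
    have h2 := hgpp xk
    have hxd : xk - xpp = η • (gradient f xk + gpp) := by
      rw [hxpp]; module
    rw [hxd, real_inner_smul_right] at h2
    set d := gradient f xk + gpp with hdd
    have hid : ⟪gradient f xk, d⟫ + ⟪gpp, d⟫ = ‖d‖ ^ 2 := by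
      rw [hdd, ← inner_add_left, real_inner_self_eq_norm_sq]
    nlinarith [sq_nonneg ‖d‖, h1, h2, hηpos.le]
  · have h1 := step yk xp gp hxp
    linarith
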